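/- With the Transformer Filter as defined (softmax-weighted average x̂_t = Σ_{i=t−H+1}^t α_{i,t} x̃_i with Gaussian weights α_{i,t} centered at x̃_t), for every ε₁ > 0, choosing β ≥ H²/(2e ε₁²) guarantees ‖x̂_t − x̃_t‖ ≤ ε₁ for all t ≥ 1. -/

import Mathlib

lemma key_bound (β γ : ℝ) (hβ : 0 < β) (hγ : 0 ≤ γ) :
    Real.exp (-β * γ ^ 2) * γ ≤ 1 / Real.sqrt (2 * Real.exp 1 * β) := by
  have hs : (0:ℝ) < 2 * Real.exp 1 * β := by positivity
  have hsq : 0 < Real.sqrt (2 * Real.exp 1 * β) := Real.sqrt_pos.mpr hs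
  have h1 : γ * Real.sqrt (2 * Real.exp 1 * β) ≤ Real.exp (β * γ ^ 2) := by
    have h2 : (γ * Real.sqrt (2 * Real.exp 1 * β)) ^ 2 ≤ (Real.exp (β * γ ^ 2)) ^ 2 := by
      have h3 : 2 * β * γ ^ 2 ≤ Real.exp (2 * β * γ ^ 2 - 1) := by
        have := Real.add_one_le_exp (2 * β * γ ^ 2 - 1); linarith
      have h4 : Real.exp 1 * (2 * β * γ ^ 2) ≤ Real.exp (2 * β * γ ^ 2) := by
        calc Real.exp 1 * (2 * β * γ ^ 2) ≤ Real.exp 1 * Real.exp (2 * β * γ ^ 2 - 1) :=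
              mul_le_mul_of_nonneg_left h3 (Real.exp_pos 1).le
          _ = Real.exp (2 * β * γ ^ 2) := by rw [← Real.exp_add]; ring_nf
      calc (γ * Real.sqrt (2 * Real.exp 1 * β)) ^ 2
          = γ ^ 2 * (2 * Real.exp 1 * β) := by rw [mul_pow, Real.sq_sqrt hs.le]
        _ = Real.exp 1 * (2 * β * γ ^ 2) := by ring
        _ ≤ Real.exp (2 * β * γ ^ 2) := h4
        _ = (Real.exp (β * γ ^ 2)) ^ 2 := by
            rw [show 2 * β * γ ^ 2 = β * γ ^ 2 + β * γ ^ 2 by ring, Real.exp_add, sq]; ring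
    exact (pow_le_pow_iff_left₀ (by positivity) (Real.exp_pos _).le two_ne_zero).mp h2
  have : Real.exp (-β * γ ^ 2) = (Real.exp (β * γ ^ 2))⁻¹ := by
    rw [← Real.exp_neg]; ring_nf
  rw [this, inv_mul_eq_div, div_le_div_iff₀ (Real.exp_pos _) hsq]
  linarith

open Finset in
/-- One step of the Transformer Filter: the Gaussian-softmax-weighted average of `H`
arbitrary tokens `x̃_0, …, x̃_{H−1}` (query the last token) is within `ε₁` of the last
token, provided `β ≥ H²/(2e ε₁²)`. -/
theorem stmt9 {n : ℕ} (H : ℕ) (hH : 0 < H)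
    (xtilde : Fin H → EuclideanSpace ℝ (Fin n))
    (ε₁ : ℝ) (hε₁ : 0 < ε₁) (β : ℝ)
    (hβ : β ≥ (H : ℝ) ^ 2 / (2 * Real.exp 1 * ε₁ ^ 2)) :
    ‖(∑ i : Fin H,
        (Real.exp (-β * ‖xtilde i - xtilde ⟨H - 1, by omega⟩‖ ^ 2) /
          ∑ j : Fin H, Real.exp (-β * ‖xtilde j - xtilde ⟨H - 1, by omega⟩‖ ^ 2)) •
          xtilde i) - xtilde ⟨H - 1, by omega⟩‖ ≤ ε₁ := by
  have hβ0 : 0 < β := lt_of_lt_of_le (by positivity) hβ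
  set t : Fin H := ⟨H - 1, by omega⟩ with ht
  set f : Fin H → ℝ := fun i => Real.exp (-β * ‖xtilde i - xtilde t‖ ^ 2) with hf
  set S : ℝ := ∑ j : Fin H, f j with hS
  have hfpos : ∀ i, 0 < f i := fun i => Real.exp_pos _
  have hS1 : 1 ≤ S := by
    have hft : f t = 1 := by simp [hf]
    calc (1:ℝ) = f t := hft.symm
      _ ≤ S := Finset.single_le_sum (fun i _ => (hfpos i).le) (Finset.mem_univ t)
  have hS0 : 0 < S := lt_of_lt_of_le one_pos hS1
  have hsum1 : ∑ i : Fin H, f i / S = 1 := by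
    rw [← Finset.sum_div, ← hS, div_self hS0.ne']
  have hrw : (∑ i : Fin H, (f i / S) • xtilde i) - xtilde t
      = ∑ i : Fin H, (f i / S) • (xtilde i - xtilde t) := by
    simp only [smul_sub, Finset.sum_sub_distrib, ← Finset.sum_smul, hsum1, one_smul]
  rw [hrw]
  calc ‖∑ i : Fin H, (f i / S) • (xtilde i - xtilde t)‖
      ≤ ∑ i : Fin H, ‖(f i / S) • (xtilde i - xtilde t)‖ := norm_sum_le _ _
    _ ≤ ∑ i : Fin H, 1 / Real.sqrt (2 * Real.exp 1 * β) := by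
        apply Finset.sum_le_sum
        intro i _
        rw [norm_smul, Real.norm_eq_abs, abs_of_pos (div_pos (hfpos i) hS0)]
        calc f i / S * ‖xtilde i - xtilde t‖ ≤ f i * ‖xtilde i - xtilde t‖ := by
              apply mul_le_mul_of_nonneg_right _ (norm_nonneg _)
              rw [div_le_iff₀ hS0]
              exact le_mul_of_one_le_right (hfpos i).le hS1
          _ ≤ 1 / Real.sqrt (2 * Real.exp 1 * β) :=
              key_bound β _ hβ0 (norm_nonneg _)
    _ = (H : ℝ) / Real.sqrt (2 * Real.exp 1 * β) := by
        rw [Finset.sum_const, Finset.card_univ]; simp [div_eq_mul_inv]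
    _ ≤ ε₁ := by
        rw [div_le_iff₀ (by positivity)]
        have hsq : Real.sqrt (2 * Real.exp 1 * ((H:ℝ)^2 / (2 * Real.exp 1 * ε₁^2)))
            ≤ Real.sqrt (2 * Real.exp 1 * β) := by
          apply Real.sqrt_le_sqrt
          apply mul_le_mul_of_nonneg_left hβ (by positivity)
        have heq : 2 * Real.exp 1 * ((H:ℝ)^2 / (2 * Real.exp 1 * ε₁^2)) = ((H:ℝ)/ε₁)^2 := by
          field_simp
        rw [heq, Real.sqrt_sq (by positivity)] at hsq
        calc (H:ℝ) = ε₁ * ((H:ℝ)/ε₁) := by field_simp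
          _ ≤ ε₁ * Real.sqrt (2 * Real.exp 1 * β) :=
              mul_le_mul_of_nonneg_left hsq hε₁.le
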